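/- There exists an absolute constant C > 0 such that for all real β with 0 < β ≤ 1, all real Δ ≥ 1, and all complex z = x + iy, one has |m⁺_{β,Δ}(z)| ≤ C · Δ² · e^{2πΔ|y|} / (β·(1 + Δ|z|)). -/

import Mathlib

open scoped Real

noncomputable def mPlusC (β Δ : ℝ) (z : ℂ) : ℂ :=
  ((β : ℂ) / ((β : ℂ) ^ 2 + z ^ 2)) *
    (((Real.exp (2 * π * β * Δ) : ℂ) + (Real.exp (-(2 * π * β * Δ)) : ℂ)
        - 2 * Complex.cos (2 * π * Δ * z)) /
      ((Real.exp (π * β * Δ) : ℂ) - (Real.exp (-(π * β * Δ)) : ℂ)) ^ 2)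

open Complex

lemma sin_prod (w v : ℂ) : Complex.sin (w+v) * Complex.sin (w-v)
    = Complex.sin w ^ 2 - Complex.sin v ^ 2 := by
  rw [Complex.sin_add, Complex.sin_sub]
  linear_combination (Complex.sin w ^ 2) * Complex.sin_sq_add_cos_sq v
    - (Complex.sin v ^ 2) * Complex.sin_sq_add_cos_sq w

lemma key_id (a : ℝ) (w : ℂ) :
    (Real.exp (2*a) : ℂ) + (Real.exp (-(2*a)) : ℂ) - 2 * Complex.cos (2*w)
      = 4 * (Complex.sin (w + a*I) * Complex.sin (w - a*I)) := by
  rw [sin_prod, Complex.sin_mul_I, Complex.cos_two_mul]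
  have h1 : (Real.exp (2*a) : ℂ) + (Real.exp (-(2*a)) : ℂ) = 2 * Complex.cosh (2*a) := by
    rw [Complex.cosh]
    push_cast [Complex.ofReal_exp]
    ring
  rw [h1]
  have h2 : Complex.cosh (2*(a:ℂ)) = 2 * Complex.sinh a ^ 2 + 1 := by
    rw [Complex.cosh_two_mul, Complex.cosh_sq]; ring
  rw [h2]
  linear_combination (-4 : ℂ) * Complex.sin_sq_add_cos_sq w
    + 4 * (Complex.sinh (a:ℂ))^2 * Complex.I_sq

lemma abs_sin_le_exp (ζ : ℂ) : ‖Complex.sin ζ‖ ≤ Real.exp |ζ.im| := by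
  rw [Complex.sin]
  have h1 : (-ζ * I).re = ζ.im := by simp
  have h2 : (ζ * I).re = -ζ.im := by simp
  calc ‖(Complex.exp (-ζ * I) - Complex.exp (ζ * I)) * I / 2‖
      ≤ (‖Complex.exp (-ζ * I)‖ + ‖Complex.exp (ζ * I)‖) / 2 := by
        rw [norm_div, norm_mul, Complex.norm_I, mul_one]
        have := norm_sub_le (Complex.exp (-ζ * I)) (Complex.exp (ζ * I))
        have h2 : ‖(2:ℂ)‖ = 2 := by norm_num
        rw [h2]
        linarith
    _ ≤ Real.exp |ζ.im| := by
        rw [Complex.norm_exp, Complex.norm_exp, h1, h2]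
        nlinarith [Real.exp_le_exp.2 (le_abs_self ζ.im),
          Real.exp_le_exp.2 (neg_le_abs ζ.im)]

lemma abs_sin_le_abs_mul (ζ : ℂ) :
    ‖Complex.sin ζ‖ ≤ ‖ζ‖ * Real.exp |ζ.im| := by
  have hsq : ‖Complex.sin ζ‖ ^ 2
      = Real.sin ζ.re ^ 2 + Real.sinh ζ.im ^ 2 := by
    rw [Complex.sin_eq, ← Complex.ofReal_sin, ← Complex.ofReal_cos,
      ← Complex.ofReal_sinh, ← Complex.ofReal_cosh, ← Complex.ofReal_mul,
      ← Complex.ofReal_mul, Complex.sq_norm, Complex.normSq_add_mul_I]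
    nlinarith [Real.sin_sq_add_cos_sq ζ.re, Real.cosh_sq ζ.im]
  have h0 : 0 ≤ |ζ.im| := abs_nonneg _
  have hE : (1:ℝ) ≤ Real.exp (2 * |ζ.im|) := Real.one_le_exp (by positivity)
  have hEsq : Real.exp |ζ.im| ^ 2 = Real.exp (2 * |ζ.im|) := by
    rw [sq, ← Real.exp_add]; ring_nf
  have hsinh : Real.sinh ζ.im ^ 2 ≤ ζ.im ^ 2 * Real.exp (2 * |ζ.im|) := by
    have h1 : Real.sinh |ζ.im| ≤ |ζ.im| * Real.exp |ζ.im| := by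
      have := Real.add_one_le_exp (-(2 * |ζ.im|))
      rw [Real.sinh_eq]
      have he : Real.exp (-|ζ.im|) = Real.exp |ζ.im| * Real.exp (-(2*|ζ.im|)) := by
        rw [← Real.exp_add]; ring_nf
      rw [he]
      nlinarith [Real.exp_pos |ζ.im|]
    have h2 : Real.sinh ζ.im ^ 2 = Real.sinh |ζ.im| ^ 2 := by
      rcases abs_cases ζ.im with ⟨h, _⟩ | ⟨h, _⟩ <;> rw [h] <;> simp [Real.sinh_neg]
    have h3 : 0 ≤ Real.sinh |ζ.im| := by
      rw [Real.sinh_eq]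
      nlinarith [Real.exp_le_exp.2 (neg_abs_le ζ.im), Real.exp_le_exp.2 (le_abs_self ζ.im),
        Real.exp_le_exp.2 (show -|ζ.im| ≤ |ζ.im| by linarith)]
    have h4 : Real.sinh |ζ.im| ^ 2 ≤ (|ζ.im| * Real.exp |ζ.im|) ^ 2 := by nlinarith
    rw [h2]
    calc Real.sinh |ζ.im| ^ 2 ≤ (|ζ.im| * Real.exp |ζ.im|) ^ 2 := h4
      _ = ζ.im ^ 2 * Real.exp (2 * |ζ.im|) := by rw [mul_pow, _root_.sq_abs, hEsq]
  have hsin : Real.sin ζ.re ^ 2 ≤ ζ.re ^ 2 := by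
    have h := Real.abs_sin_le_abs (x := ζ.re)
    have := abs_nonneg (Real.sin ζ.re)
    nlinarith [_root_.sq_abs (Real.sin ζ.re), _root_.sq_abs ζ.re]
  have habs2 : ‖ζ‖ ^ 2 = ζ.re ^ 2 + ζ.im ^ 2 := by
    rw [Complex.sq_norm, Complex.normSq_apply]; ring
  have hfin : ‖Complex.sin ζ‖ ^ 2 ≤ (‖ζ‖ * Real.exp |ζ.im|) ^ 2 := by
    rw [hsq, mul_pow, habs2, hEsq]
    nlinarith [sq_nonneg ζ.re]
  nlinarith [mul_nonneg (norm_nonneg ζ) (Real.exp_pos |ζ.im|).le,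
    norm_nonneg (Complex.sin ζ)]

lemma aux1 : π*(π+2) ≤ 20 := by nlinarith [Real.pi_lt_d2, Real.pi_gt_three]
lemma aux2 : 2*π^2 ≤ 20 := by nlinarith [Real.pi_lt_d2, Real.pi_pos]
lemma aux3 : 4*π ≤ 20 := by linarith [Real.pi_le_four]

lemma coreIneq (β Δ R rp rm : ℝ) (hβ : 0 < β) (hβ1 : β ≤ 1) (hΔ : 1 ≤ Δ)
    (hrp : 0 < rp) (hrm : 0 < rm) (hR : 0 ≤ R)
    (hsum : 2*β ≤ rp + rm) (hp : R - β ≤ rp) (hm : R - β ≤ rm) :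
    min 1 (π*Δ*rp) * min 1 (π*Δ*rm) * (β^2*(1+Δ*R))
      ≤ 20 * min 1 (π*β*Δ)^2 * Δ^2 * (rp*rm) := by
  have hπ3 : (3:ℝ) ≤ π := Real.pi_gt_three.le
  have hπ315 : π ≤ 3.15 := Real.pi_lt_d2.le
  have hΔ0 : (0:ℝ) < Δ := by linarith
  have hΔ2 : (1:ℝ) ≤ Δ^2 := one_le_pow₀ hΔ
  have hpd2 : (3:ℝ)*1 ≤ π*Δ^2 := mul_le_mul hπ3 hΔ2 zero_le_one Real.pi_pos.le
  have kp1 : min 1 (π*Δ*rp) ≤ 1 := min_le_left _ _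
  have kp2 : min 1 (π*Δ*rp) ≤ π*Δ*rp := min_le_right _ _
  have km1 : min 1 (π*Δ*rm) ≤ 1 := min_le_left _ _
  have km2 : min 1 (π*Δ*rm) ≤ π*Δ*rm := min_le_right _ _
  have kp0 : 0 ≤ min 1 (π*Δ*rp) := le_min zero_le_one (by positivity)
  have km0 : 0 ≤ min 1 (π*Δ*rm) := le_min zero_le_one (by positivity)
  rcases le_total (π*β*Δ) 1 with ha | ha
  · rw [min_eq_right ha]
    rcases le_total (Δ*R) 1 with hDR | hDR
    · calc min 1 (π*Δ*rp) * min 1 (π*Δ*rm) * (β^2*(1+Δ*R))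
          ≤ (π*Δ*rp) * (π*Δ*rm) * (β^2*2) := by
            apply mul_le_mul (mul_le_mul kp2 km2 km0 (by positivity)) (by nlinarith)
              (by positivity) (by positivity)
        _ = 2*(π^2*Δ^2*β^2*(rp*rm)) := by ring
        _ ≤ (20*Δ^2)*(π^2*Δ^2*β^2*(rp*rm)) := by
            apply mul_le_mul_of_nonneg_right (by linarith) (by positivity)
        _ = 20 * (π*β*Δ)^2 * Δ^2 * (rp*rm) := by ring
    · -- Δ*R ≥ 1, and π*β*Δ ≤ 1 ⇒ β small
      have hβR : π*β ≤ R := by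
        have h1 : (π*β)*Δ ≤ R*Δ := by
          have := le_trans ha hDR; linarith [this]
        exact le_of_mul_le_mul_right h1 hΔ0
      have h3b : 3*β ≤ π*β := mul_le_mul_of_nonneg_right hπ3 hβ.le
      have hrm2 : R ≤ 2*rm := by linarith
      calc min 1 (π*Δ*rp) * min 1 (π*Δ*rm) * (β^2*(1+Δ*R))
          ≤ (π*Δ*rp) * 1 * (β^2*(2*(Δ*R))) := by
            apply mul_le_mul (mul_le_mul kp2 km1 km0 (by positivity))
              (mul_le_mul_of_nonneg_left (by linarith) (by positivity))
              (by positivity) (by positivity)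
        _ ≤ (π*Δ*rp) * 1 * (β^2*(2*(Δ*(2*rm)))) := by gcongr
        _ = 4*(π*Δ^2*β^2*(rp*rm)) := by ring
        _ ≤ (20*π*Δ^2)*(π*Δ^2*β^2*(rp*rm)) := by
            apply mul_le_mul_of_nonneg_right (by linarith) (by positivity)
        _ = 20 * (π*β*Δ)^2 * Δ^2 * (rp*rm) := by ring
  · rw [min_eq_left ha]
    rcases le_total R (2*β) with hRβ | hRβ
    · have hDR2 : Δ*R ≤ Δ*(2*β) := mul_le_mul_of_nonneg_left hRβ hΔ0.le
      have h1ΔR : 1 + Δ*R ≤ (π+2)*(β*Δ) := by linarith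
      rcases le_total rp rm with hc | hc
      · have hβrm : β ≤ rm := by linarith
        calc min 1 (π*Δ*rp) * min 1 (π*Δ*rm) * (β^2*(1+Δ*R))
            ≤ (π*Δ*rp) * 1 * (β^2*((π+2)*(β*Δ))) := by
              apply mul_le_mul (mul_le_mul kp2 km1 km0 (by positivity))
                (mul_le_mul_of_nonneg_left h1ΔR (by positivity))
                (by positivity) (by positivity)
          _ = (π*(π+2)) * (Δ^2*(β^3*rp)) := by ring
          _ ≤ 20 * (Δ^2*(β^3*rp)) := by
              apply mul_le_mul_of_nonneg_right aux1 (by positivity)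
          _ ≤ 20 * (Δ^2*(rm*rp)) := by
              have h3 : β^3 ≤ rm :=
                le_trans (pow_le_of_le_one hβ.le hβ1 three_ne_zero) hβrm
              gcongr
          _ = 20 * 1^2 * Δ^2 * (rp*rm) := by ring
      · have hβrp : β ≤ rp := by linarith
        calc min 1 (π*Δ*rp) * min 1 (π*Δ*rm) * (β^2*(1+Δ*R))
            ≤ 1 * (π*Δ*rm) * (β^2*((π+2)*(β*Δ))) := by
              apply mul_le_mul (mul_le_mul kp1 km2 km0 (by positivity))
                (mul_le_mul_of_nonneg_left h1ΔR (by positivity))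
                (by positivity) (by positivity)
          _ = (π*(π+2)) * (Δ^2*(β^3*rm)) := by ring
          _ ≤ 20 * (Δ^2*(β^3*rm)) := by
              apply mul_le_mul_of_nonneg_right aux1 (by positivity)
          _ ≤ 20 * (Δ^2*(rp*rm)) := by
              have h3 : β^3 ≤ rp :=
                le_trans (pow_le_of_le_one hβ.le hβ1 three_ne_zero) hβrp
              gcongr
          _ = 20 * 1^2 * Δ^2 * (rp*rm) := by ring
    · have hrm2 : R ≤ 2*rm := by linarith
      have hβ2 : β^2 ≤ 1 := pow_le_one₀ hβ.le hβ1
      rcases le_total (Δ*R) 1 with hDR | hDR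
      · calc min 1 (π*Δ*rp) * min 1 (π*Δ*rm) * (β^2*(1+Δ*R))
            ≤ (π*Δ*rp) * (π*Δ*rm) * (1*2) := by
              apply mul_le_mul (mul_le_mul kp2 km2 km0 (by positivity))
                (mul_le_mul hβ2 (by linarith) (by positivity) zero_le_one)
                (by positivity) (by positivity)
          _ = (2*π^2) * (Δ^2*(rp*rm)) := by ring
          _ ≤ 20 * (Δ^2*(rp*rm)) := by
              apply mul_le_mul_of_nonneg_right aux2 (by positivity)
          _ = 20 * 1^2 * Δ^2 * (rp*rm) := by ring
      · calc min 1 (π*Δ*rp) * min 1 (π*Δ*rm) * (β^2*(1+Δ*R))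
            ≤ (π*Δ*rp) * 1 * (1*(2*(Δ*R))) := by
              apply mul_le_mul (mul_le_mul kp2 km1 km0 (by positivity))
                (mul_le_mul hβ2 (by linarith) (by positivity) zero_le_one)
                (by positivity) (by positivity)
          _ ≤ (π*Δ*rp) * 1 * (1*(2*(Δ*(2*rm)))) := by gcongr
          _ = (4*π) * (Δ^2*(rp*rm)) := by ring
          _ ≤ 20 * (Δ^2*(rp*rm)) := by
              apply mul_le_mul_of_nonneg_right aux3 (by positivity)
          _ = 20 * 1^2 * Δ^2 * (rp*rm) := by ring

theorem complex_growth_bound_majorant :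
    ∃ C : ℝ, 0 < C ∧ ∀ β Δ : ℝ, ∀ z : ℂ, 0 < β → β ≤ 1 → 1 ≤ Δ →
      ‖mPlusC β Δ z‖ ≤
        C * Δ ^ 2 * Real.exp (2 * π * Δ * |z.im|) / (β * (1 + Δ * ‖z‖)) := by
  refine ⟨180, by norm_num, ?_⟩
  intro β Δ z hβ hβ1 hΔ
  have hΔ0 : (0:ℝ) < Δ := lt_of_lt_of_le one_pos hΔ
  have hπ : (0:ℝ) < π := Real.pi_pos
  have hRpos : (0:ℝ) < β * (1 + Δ * ‖z‖) := by positivity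
  by_cases hz : (β:ℂ)^2 + z^2 = 0
  · rw [mPlusC, hz, div_zero, zero_mul, norm_zero]
    positivity
  · set a : ℝ := π * β * Δ with ha_def
    have ha : 0 < a := by positivity
    set ζp : ℂ := ((π:ℂ) * Δ * (z + β*I)) with hζp_def
    set ζm : ℂ := ((π:ℂ) * Δ * (z - β*I)) with hζm_def
    have hfac : (β:ℂ)^2 + z^2 = (z + β*I) * (z - β*I) := by
      linear_combination ((β:ℂ)^2) * Complex.I_sq
    have hp0 : (z + β*I) ≠ 0 := by
      intro h; apply hz; rw [hfac, h, zero_mul]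
    have hm0 : (z - β*I) ≠ 0 := by
      intro h; apply hz; rw [hfac, h, mul_zero]
    set rp : ℝ := ‖z + β*I‖ with hrp_def
    set rm : ℝ := ‖z - β*I‖ with hrm_def
    have hrp : 0 < rp := norm_pos_iff.mpr hp0
    have hrm : 0 < rm := norm_pos_iff.mpr hm0
    -- numerator identity
    have hnum : (Real.exp (2 * π * β * Δ) : ℂ) + (Real.exp (-(2 * π * β * Δ)) : ℂ)
        - 2 * Complex.cos (2 * π * Δ * z)
        = 4 * (Complex.sin ζp * Complex.sin ζm) := by
      have h := key_id (π*β*Δ) ((π:ℂ) * Δ * z)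
      rw [show (2*π*β*Δ) = 2*(π*β*Δ) by ring,
          show (2*(π:ℂ)*Δ*z) = 2*((π:ℂ)*Δ*z) by ring, h]
      rw [hζp_def, hζm_def]
      have e1 : (π:ℂ)*Δ*z + ((π*β*Δ:ℝ):ℂ)*I = (π:ℂ)*Δ*(z + β*I) := by
        push_cast; ring
      have e2 : (π:ℂ)*Δ*z - ((π*β*Δ:ℝ):ℂ)*I = (π:ℂ)*Δ*(z - β*I) := by
        push_cast; ring
      rw [e1, e2]
    -- clean form
    have hE : 0 < Real.exp a - Real.exp (-a) := by
      have := Real.exp_lt_exp.2 (show -a < a by linarith)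
      linarith
    have hm_eq : mPlusC β Δ z
        = (β:ℂ) * (4 * (Complex.sin ζp * Complex.sin ζm))
          / (((z + β*I) * (z - β*I)) * (((Real.exp a - Real.exp (-a) : ℝ)):ℂ)^2) := by
      rw [mPlusC, hfac, hnum]
      rw [show ((Real.exp (π*β*Δ) : ℂ) - (Real.exp (-(π*β*Δ)) : ℂ))
          = (((Real.exp a - Real.exp (-a) : ℝ)):ℂ) by rw [ha_def]; push_cast; ring]
      rw [div_mul_div_comm]
    -- absolute value
    set sp : ℝ := ‖Complex.sin ζp‖ with hsp_def
    set sm : ℝ := ‖Complex.sin ζm‖ with hsm_def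
    have habs : ‖mPlusC β Δ z‖
        = β * (4 * (sp * sm)) / ((rp * rm) * (Real.exp a - Real.exp (-a))^2) := by
      rw [hm_eq, norm_div, norm_mul, norm_mul, norm_mul, norm_mul, norm_pow,
        Complex.norm_real, Real.norm_eq_abs, Complex.norm_real, Real.norm_eq_abs]
      rw [abs_of_pos hβ, abs_of_pos hE]
      norm_num
      rfl
    rw [habs]
    rw [div_le_div_iff₀ (by positivity) hRpos]
    -- bounds on sp, sm
    have hbp : sp ≤ min 1 (π*Δ*rp) * Real.exp (π*Δ*|z.im| + a) := by
      have hζabs : ‖ζp‖ = π*Δ*rp := by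
        rw [hζp_def, hrp_def, norm_mul, norm_mul, Complex.norm_real, Real.norm_eq_abs, Complex.norm_real, Real.norm_eq_abs,
          abs_of_pos hπ, abs_of_pos hΔ0]
      have hζim : |ζp.im| ≤ π*Δ*|z.im| + a := by
        have h1 : ζp.im = π*Δ*(z.im + β) := by
          rw [hζp_def]; simp [Complex.mul_im, Complex.add_im, Complex.mul_re]
        rw [h1, ha_def, abs_mul, abs_of_pos (by positivity : (0:ℝ) < π*Δ)]
        calc π*Δ*|z.im + β| ≤ π*Δ*(|z.im| + β) := by
              gcongr
              calc |z.im + β| ≤ |z.im| + |β| := abs_add_le _ _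
                _ = |z.im| + β := by rw [abs_of_pos hβ]
          _ = π*Δ*|z.im| + π*β*Δ := by ring
      have hEm : Real.exp |ζp.im| ≤ Real.exp (π*Δ*|z.im| + a) := Real.exp_le_exp.2 hζim
      rcases le_total 1 (π*Δ*rp) with h | h
      · rw [min_eq_left h, one_mul]
        exact le_trans (abs_sin_le_exp ζp) hEm
      · rw [min_eq_right h]
        calc sp ≤ ‖ζp‖ * Real.exp |ζp.im| := abs_sin_le_abs_mul ζp
          _ ≤ (π*Δ*rp) * Real.exp (π*Δ*|z.im| + a) := by
              rw [hζabs]; gcongr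
    have hbm : sm ≤ min 1 (π*Δ*rm) * Real.exp (π*Δ*|z.im| + a) := by
      have hζabs : ‖ζm‖ = π*Δ*rm := by
        rw [hζm_def, hrm_def, norm_mul, norm_mul, Complex.norm_real, Real.norm_eq_abs, Complex.norm_real, Real.norm_eq_abs,
          abs_of_pos hπ, abs_of_pos hΔ0]
      have hζim : |ζm.im| ≤ π*Δ*|z.im| + a := by
        have h1 : ζm.im = π*Δ*(z.im - β) := by
          rw [hζm_def]; simp [Complex.mul_im, Complex.sub_im, Complex.mul_re]
        rw [h1, ha_def, abs_mul, abs_of_pos (by positivity : (0:ℝ) < π*Δ)]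
        calc π*Δ*|z.im - β| ≤ π*Δ*(|z.im| + β) := by
              gcongr
              calc |z.im - β| ≤ |z.im| + |β| := abs_sub _ _
                _ = |z.im| + β := by rw [abs_of_pos hβ]
          _ = π*Δ*|z.im| + π*β*Δ := by ring
      have hEm : Real.exp |ζm.im| ≤ Real.exp (π*Δ*|z.im| + a) := Real.exp_le_exp.2 hζim
      rcases le_total 1 (π*Δ*rm) with h | h
      · rw [min_eq_left h, one_mul]
        exact le_trans (abs_sin_le_exp ζm) hEm
      · rw [min_eq_right h]
        calc sm ≤ ‖ζm‖ * Real.exp |ζm.im| := abs_sin_le_abs_mul ζm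
          _ ≤ (π*Δ*rm) * Real.exp (π*Δ*|z.im| + a) := by
              rw [hζabs]; gcongr
    -- exp product
    have hexp2 : Real.exp (π*Δ*|z.im| + a) * Real.exp (π*Δ*|z.im| + a)
        = Real.exp (2*π*Δ*|z.im|) * Real.exp (2*a) := by
      rw [← Real.exp_add, ← Real.exp_add]; ring_nf
    -- denominator lower bound
    have hden : Real.exp (2*a) * ((2/3) * min 1 a)^2 ≤ (Real.exp a - Real.exp (-a))^2 := by
      have hsplit : Real.exp a - Real.exp (-a) = Real.exp a * (1 - Real.exp (-(2*a))) := by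
        rw [mul_sub, mul_one, ← Real.exp_add]; ring_nf
      have hinv : Real.exp (-(2*a)) * (1 + 2*a) ≤ 1 := by
        have h1 : 1 + 2*a ≤ Real.exp (2*a) := by
          have := Real.add_one_le_exp (2*a); linarith
        have h2 : Real.exp (-(2*a)) * (1+2*a) ≤ Real.exp (-(2*a)) * Real.exp (2*a) :=
          mul_le_mul_of_nonneg_left h1 (Real.exp_pos _).le
        rw [← Real.exp_add] at h2; simpa using h2
      have hlow : (2/3) * min 1 a ≤ 1 - Real.exp (-(2*a)) := by
        have hEp := (Real.exp_pos (-(2*a))).le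
        rcases le_total a 1 with h | h
        · rw [min_eq_right h]
          nlinarith [hinv]
        · rw [min_eq_left h]
          nlinarith [hinv]
      have hmn0 : 0 ≤ (2/3) * min 1 a := by
        have : 0 ≤ min 1 a := le_min zero_le_one ha.le
        positivity
      have h1e : 1 - Real.exp (-(2*a)) ≤ 1 := by
        have := (Real.exp_pos (-(2*a))).le; linarith
      calc Real.exp (2*a) * ((2/3) * min 1 a)^2
          ≤ Real.exp (2*a) * (1 - Real.exp (-(2*a)))^2 := by
            apply mul_le_mul_of_nonneg_left _ (Real.exp_pos _).le
            exact pow_le_pow_left₀ hmn0 hlow 2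
        _ = (Real.exp a * (1 - Real.exp (-(2*a))))^2 := by
            rw [mul_pow, pow_two (Real.exp a), ← Real.exp_add]; ring_nf
        _ = (Real.exp a - Real.exp (-a))^2 := by rw [← hsplit]
    -- triangle facts
    have hsum : 2*β ≤ rp + rm := by
      have h1 : ‖(z + β*I) - (z - β*I)‖ ≤ rp + rm :=
        norm_sub_le _ _
      have h2 : (z + (β:ℂ)*I) - (z - β*I) = ((2*β:ℝ):ℂ)*I := by push_cast; ring
      rw [h2, norm_mul, Complex.norm_I, mul_one, Complex.norm_real, Real.norm_eq_abs,
        abs_of_pos (by positivity : (0:ℝ) < 2*β)] at h1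
      exact h1
    have hptri : ‖z‖ - β ≤ rp := by
      have h1 : ‖z‖ ≤ rp + β := by
        calc ‖z‖ = ‖(z + β*I) - β*I‖ := by ring_nf
          _ ≤ rp + ‖(β:ℂ)*I‖ := norm_sub_le _ _
          _ = rp + β := by
              rw [norm_mul, Complex.norm_I, mul_one, Complex.norm_real, Real.norm_eq_abs, abs_of_pos hβ]
      linarith
    have hmtri : ‖z‖ - β ≤ rm := by
      have h1 : ‖z‖ ≤ rm + β := by
        calc ‖z‖ = ‖(z - β*I) + β*I‖ := by ring_nf
          _ ≤ rm + ‖(β:ℂ)*I‖ := norm_add_le _ _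
          _ = rm + β := by
              rw [norm_mul, Complex.norm_I, mul_one, Complex.norm_real, Real.norm_eq_abs, abs_of_pos hβ]
      linarith
    have hcore := coreIneq β Δ (‖z‖) rp rm hβ hβ1 hΔ hrp hrm
      (norm_nonneg z) hsum hptri hmtri
    -- final chain
    have hsp0 : 0 ≤ sp := norm_nonneg _
    have hsm0 : 0 ≤ sm := norm_nonneg _
    have hmp0 : 0 ≤ min 1 (π*Δ*rp) := le_min zero_le_one (by positivity)
    have hmm0 : 0 ≤ min 1 (π*Δ*rm) := le_min zero_le_one (by positivity)
    have hX : (0:ℝ) < Real.exp (2*π*Δ*|z.im|) := Real.exp_pos _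
    calc β * (4 * (sp * sm)) * (β * (1 + Δ * ‖z‖))
        ≤ β * (4 * ((min 1 (π*Δ*rp) * Real.exp (π*Δ*|z.im| + a))
            * (min 1 (π*Δ*rm) * Real.exp (π*Δ*|z.im| + a))))
            * (β * (1 + Δ * ‖z‖)) := by
          apply mul_le_mul_of_nonneg_right _ hRpos.le
          apply mul_le_mul_of_nonneg_left _ hβ.le
          apply mul_le_mul_of_nonneg_left _ (by norm_num : (0:ℝ) ≤ 4)
          exact mul_le_mul hbp hbm hsm0 (by positivity)
      _ = 4 * (Real.exp (2*π*Δ*|z.im|) * Real.exp (2*a))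
            * (min 1 (π*Δ*rp) * min 1 (π*Δ*rm) * (β^2*(1 + Δ * ‖z‖))) := by
          rw [← hexp2]; ring
      _ ≤ 4 * (Real.exp (2*π*Δ*|z.im|) * Real.exp (2*a))
            * (20 * min 1 a ^ 2 * Δ^2 * (rp*rm)) := by
          apply mul_le_mul_of_nonneg_left _ (by positivity)
          exact hcore
      _ = 180 * Δ^2 * Real.exp (2*π*Δ*|z.im|)
            * ((rp*rm) * (Real.exp (2*a) * ((2/3) * min 1 a)^2)) := by ring
      _ ≤ 180 * Δ^2 * Real.exp (2*π*Δ*|z.im|)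
            * ((rp*rm) * (Real.exp a - Real.exp (-a))^2) := by
          apply mul_le_mul_of_nonneg_left _ (by positivity)
          exact mul_le_mul_of_nonneg_left hden (by positivity)
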